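/- arXiv:2601.15871 — 2 statements merged into one kernel-verified Lean document; each statement's English description precedes it below -/
import Mathlib

section
/- Let n ≥ 2, let R be a relation on Fin n, and let S = Relation.ReflGen R be its reflexive closure (S a b ↔ a = b ∨ R a b). Then for every t ∈ ℕ with 2^t ≥ n - 1, relPow S (2^t) = Relation.ReflTransGen R. Consequently, starting from A⁽⁰⁾ = I ∨ A and repeatedly Boolean-squaring, A⁽ᵗ⁺¹⁾ = A⁽ᵗ⁾ ⊙ A⁽ᵗ⁾, one obtains the reflexive transitive closure A* after t = ⌈log₂(n-1)⌉ iterations. -/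
/-- The `k`-fold relational power: `relPow R k a b` means there is a chain
`a = c₀, c₁, …, c_k = b` with `R c_p c_{p+1}` for all `p`. -/
def relPow {α : Type*} (R : α → α → Prop) : ℕ → α → α → Prop
  | 0 => Eq
  | k + 1 => Relation.Comp R (relPow R k)

lemma relPow_iff_fun {α : Type*} (R : α → α → Prop) :
    ∀ (j : ℕ) (a b : α), relPow R j a b ↔
      ∃ f : ℕ → α, f 0 = a ∧ f j = b ∧ ∀ i < j, R (f i) (f (i + 1)) := by
  intro j
  induction j with
  | zero =>
    intro a b
    constructor
    · intro h; exact ⟨fun _ => a, rfl, h, by omega⟩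
    · rintro ⟨f, h0, hj, _⟩; exact (h0.symm.trans hj : a = b)
  | succ k ih =>
    intro a b
    constructor
    · rintro ⟨c, hac, hcb⟩
      obtain ⟨f, h0, hk, hstep⟩ := (ih c b).mp hcb
      refine ⟨fun i => Nat.rec a (fun i' _ => f i') i, rfl, hk, ?_⟩
      intro i hi
      cases i with
      | zero => simpa [h0] using hac
      | succ i' => exact hstep i' (by omega)
    · rintro ⟨f, h0, hj, hstep⟩
      refine ⟨f 1, by simpa [h0] using hstep 0 (by omega), ?_⟩
      exact (ih (f 1) b).mpr ⟨fun i => f (i + 1), rfl, hj, fun i hi => hstep (i + 1) (by omega)⟩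

lemma relPow_reflGen_iff {α : Type*} (R : α → α → Prop) :
    ∀ (k : ℕ) (a b : α), relPow (Relation.ReflGen R) k a b ↔
      ∃ j ≤ k, relPow R j a b := by
  intro k
  induction k with
  | zero => intro a b; exact ⟨fun h => ⟨0, le_refl _, h⟩, fun ⟨j, hj, h⟩ => by
      interval_cases j; exact h⟩
  | succ k ih =>
    intro a b
    constructor
    · rintro ⟨c, hac, hcb⟩
      obtain ⟨j, hj, hcbj⟩ := (ih c b).mp hcb
      cases hac with
      | refl => exact ⟨j, by omega, hcbj⟩
      | single h => exact ⟨j + 1, by omega, ⟨c, h, hcbj⟩⟩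
    · rintro ⟨j, hj, h⟩
      cases j with
      | zero =>
        cases h
        exact ⟨a, Relation.ReflGen.refl, (ih a a).mpr ⟨0, by omega, rfl⟩⟩
      | succ j' =>
        obtain ⟨c, hac, hcb⟩ := h
        exact ⟨c, Relation.ReflGen.single hac,
          (ih c b).mpr ⟨j', by omega, hcb⟩⟩

lemma relPow_shorten (n : ℕ) (R : Fin n → Fin n → Prop) :
    ∀ (j : ℕ) (a b : Fin n), relPow R j a b → ∃ j' ≤ n - 1, relPow R j' a b := by
  intro j
  induction j using Nat.strong_induction_on with
  | _ j IH =>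
    intro a b h
    by_cases hj : j ≤ n - 1
    · exact ⟨j, hj, h⟩
    · have hn : n ≤ j := by
        have : 0 < n := a.pos
        omega
      obtain ⟨f, h0, hjb, hstep⟩ := (relPow_iff_fun R j a b).mp h
      have hcard : Fintype.card (Fin n) < Fintype.card (Fin (n + 1)) := by simp
      obtain ⟨p, q, hpq, hfeq⟩ :=
        Fintype.exists_ne_map_eq_of_card_lt (fun i : Fin (n + 1) => f i.val) hcard
      -- wlog p < q
      obtain ⟨P, Q, hPQ, hfPQ⟩ : ∃ P Q : ℕ, P < Q ∧ Q ≤ n ∧ f P = f Q := by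
        rcases lt_or_gt_of_ne (fun hc => hpq (Fin.ext hc) : p.val ≠ q.val) with hlt | hgt
        · exact ⟨p.val, q.val, hlt, by omega, hfeq⟩
        · exact ⟨q.val, p.val, hgt, by omega, hfeq.symm⟩
      obtain ⟨hQn, hfPQ⟩ := hfPQ
      set d := Q - P with hd
      have hd1 : 1 ≤ d := by omega
      have hnew : relPow R (j - d) a b := by
        refine (relPow_iff_fun R (j - d) a b).mpr
          ⟨fun i => if i ≤ P then f i else f (i + d), by simp [h0], ?_, ?_⟩
        · dsimp only
          by_cases hc : j - d ≤ P
          · have hP : j - d = P := by omega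
            rw [if_pos hc, hP, hfPQ, (by omega : Q = j), hjb]
          · rw [if_neg hc, (by omega : j - d + d = j), hjb]
        · intro i hi
          dsimp only
          by_cases h1 : i + 1 ≤ P
          · rw [if_pos (by omega : i ≤ P), if_pos h1]
            exact hstep i (by omega)
          · rw [if_neg h1]
            by_cases h2 : i ≤ P
            · have hiP : i = P := by omega
              rw [if_pos h2, hiP, hfPQ, (by omega : P + 1 + d = Q + 1)]
              exact hstep Q (by omega)
            · rw [if_neg h2, (by omega : i + 1 + d = i + d + 1)]
              exact hstep (i + d) (by omega)
      exact IH (j - d) (by omega) a b hnew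

lemma relPow_to_rtg {α : Type*} (R : α → α → Prop) :
    ∀ (j : ℕ) (a b : α), relPow R j a b → Relation.ReflTransGen R a b := by
  intro j
  induction j with
  | zero => intro a b h; rw [h]
  | succ k ih =>
    rintro a b ⟨c, hac, hcb⟩
    exact Relation.ReflTransGen.head hac (ih c b hcb)

lemma rtg_to_relPow {α : Type*} (R : α → α → Prop) (a b : α)
    (h : Relation.ReflTransGen R a b) : ∃ j, relPow R j a b := by
  induction h using Relation.ReflTransGen.head_induction_on with
  | refl => exact ⟨0, rfl⟩
  | head hac _ ih =>
    obtain ⟨j, hj⟩ := ih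
    exact ⟨j + 1, _, hac, hj⟩

/-- Kleene–Valiant iteration: starting from the reflexive closure
`S = I ∨ A` and Boolean-squaring, after `t` iterations with `2^t ≥ n - 1` one obtains
exactly the reflexive transitive closure `A*`. -/
theorem kleene_valiant_squaring
    (n : ℕ) (hn : 2 ≤ n) (R : Fin n → Fin n → Prop)
    (S : Fin n → Fin n → Prop) (hS : S = Relation.ReflGen R) :
    ∀ t : ℕ, n - 1 ≤ 2 ^ t →
      relPow S (2 ^ t) = Relation.ReflTransGen R := by
  intro t ht
  subst hS
  funext a b
  apply propext
  constructor
  · intro h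
    obtain ⟨j, _, hj⟩ := (relPow_reflGen_iff R (2 ^ t) a b).mp h
    exact relPow_to_rtg R j a b hj
  · intro h
    obtain ⟨j, hj⟩ := rtg_to_relPow R a b h
    obtain ⟨j', hj', h'⟩ := relPow_shorten n R j a b hj
    exact (relPow_reflGen_iff R (2 ^ t) a b).mpr ⟨j', by omega, h'⟩
end

section
/- Let R be a relation on a type α, let B a b ↔ Relation.ReflTransGen R a b ∧ Relation.ReflTransGen R b a be the mutual reachability equivalence, and let Q be the quotient of α by B. Define the condensation relation on Q by: P ⟶ P' iff P ≠ P' and there exist representatives a of P and b of P' with R a b. Then the condensation relation is acyclic: for every class P, ¬ Relation.TransGen (⟶) P P; that is, the condensation graph of a directed graph is a directed acyclic graph. -/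
/-- The condensation graph of a directed graph is a directed acyclic
graph: on the quotient by the mutual reachability equivalence, the condensation
relation admits no directed cycles. -/
theorem condensation_graph_acyclic
    {α : Type*} (R : α → α → Prop)
    (s : Setoid α)
    (hs : ∀ a b : α, s.r a b ↔
      Relation.ReflTransGen R a b ∧ Relation.ReflTransGen R b a)
    (E : Quotient s → Quotient s → Prop)
    (hE : ∀ P P' : Quotient s, E P P' ↔
      (P ≠ P' ∧ ∃ a b : α, Quotient.mk s a = P ∧ Quotient.mk s b = P' ∧ R a b)) :
    ∀ P : Quotient s, ¬ Relation.TransGen E P P := by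
  -- A single edge gives reachability between any representatives.
  have key1 : ∀ P P' : Quotient s, E P P' → ∀ a b : α,
      Quotient.mk s a = P → Quotient.mk s b = P' → Relation.ReflTransGen R a b := by
    intro P P' h a b ha hb
    obtain ⟨-, x, y, hx, hy, hxy⟩ := (hE P P').mp h
    have hax : s.r a x := Quotient.eq.mp (ha.trans hx.symm)
    have hyb : s.r y b := Quotient.eq.mp (hy.trans hb.symm)
    exact (((hs a x).mp hax).1.trans (Relation.ReflTransGen.single hxy)).trans
      ((hs y b).mp hyb).1
  -- TransGen gives reachability between representatives.
  have key : ∀ P P' : Quotient s, Relation.TransGen E P P' → ∀ a b : α,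
      Quotient.mk s a = P → Quotient.mk s b = P' → Relation.ReflTransGen R a b := by
    intro P P' h
    induction h with
    | single h => exact key1 _ _ h
    | tail _ h2 ih =>
      intro a b ha hb
      rename_i Q Q' _
      obtain ⟨c⟩ := Q.exists_rep
      exact (ih a c ha (by assumption)).trans (key1 _ _ h2 c b (by assumption) hb)
  intro P hP
  rcases Relation.TransGen.head'_iff.mp hP with ⟨Q, hPQ, hQP'⟩
  rcases Relation.reflTransGen_iff_eq_or_transGen.mp hQP' with rfl | hQP
  · exact ((hE P P).mp hPQ).1 rfl
  · obtain ⟨a, ha⟩ := P.exists_rep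
    obtain ⟨b, hb⟩ := Q.exists_rep
    have h1 := key1 P Q hPQ a b ha hb
    have h2 := key Q P hQP b a hb ha
    have : s.r a b := (hs a b).mpr ⟨h1, h2⟩
    exact ((hE P Q).mp hPQ).1 (ha ▸ hb ▸ Quotient.sound this)
end
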